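/- arXiv:2205.14754 — 2 statements merged into one kernel-verified Lean document; each statement's English description precedes it below -/
import Mathlib

section
/- Let G be a finite simple graph with n edges numbered 1,…,n, and let a, b ∈ ℝⁿ be two weight vectors lying in the same region of the matching arrangement MA(G) (i.e., for every simple path or even simple cycle P = (r₁,…,r_m) in G, the alternating sums a_{r₁} − a_{r₂} + a_{r₃} − ⋯ and b_{r₁} − b_{r₂} + b_{r₃} − ⋯ have the same strict sign). If M is the unique maximum-weight matching for weights a, then M is also the unique maximum-weight matching for weights b. -/
open Finset

/-- The alternating-sign vector `e_{i₁} - e_{i₂} + e_{i₃} - ⋯` of a list of indices. -/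
def altVec {n : ℕ} : List (Fin n) → (Fin n → ℝ)
  | [] => 0
  | i :: l => Pi.single i 1 - altVec l

/-- The hyperplane (through the origin) with normal vector `v`, i.e. the kernel of
`x ↦ ∑ i, v i * x i`. -/
noncomputable def hyp {n : ℕ} (v : Fin n → ℝ) : Submodule ℝ (Fin n → ℝ) :=
  LinearMap.ker (∑ i, v i • (LinearMap.proj i : (Fin n → ℝ) →ₗ[ℝ] ℝ))

/-- The list of edge numbers along a walk, for a numbering `N` of the edges. -/
def edgeIdx {V : Type*} {n : ℕ} {G : SimpleGraph V} (N : G.edgeSet ≃ Fin n)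
    {a b : V} (p : G.Walk a b) : List (Fin n) :=
  p.edges.pmap (fun e he => N ⟨e, he⟩) (fun _ he => p.edges_subset_edgeSet he)

/-- The matching arrangement `MA(G, N)` of a graph `G` with edge numbering `N`:
the set of hyperplanes `x_{r₁} - x_{r₂} + x_{r₃} - ⋯ = 0`, one for every simple path
and every even simple cycle `(r₁, …, r_m)` of `G`. -/
noncomputable def MASet {V : Type*} {n : ℕ} (G : SimpleGraph V) (N : G.edgeSet ≃ Fin n) :
    Set (Submodule ℝ (Fin n → ℝ)) :=
  {H | (∃ (a b : V) (p : G.Walk a b), 0 < p.length ∧ p.IsPath ∧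
          H = hyp (altVec (edgeIdx N p))) ∨
       (∃ (a : V) (p : G.Walk a a), p.IsCycle ∧ Even p.length ∧
          H = hyp (altVec (edgeIdx N p)))}

/-- The value at `t` of the characteristic polynomial of a (central) arrangement, given by
Whitney's formula `χ_A(t) = ∑_{S ⊆ A} (-1)^{|S|} t^{dim ∩ S}`. -/
noncomputable def charPolyEval {M : Type*} [AddCommGroup M] [Module ℝ M]
    (A : Finset (Submodule ℝ M)) (t : ℝ) : ℝ :=
  ∑ S ∈ A.powerset, (-1 : ℝ) ^ S.card * t ^ (Module.finrank ℝ ↥(S.inf id))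

/-- A matching of `G` given as a set of edge numbers (with respect to the numbering `N`):
no two of the corresponding edges share a vertex. -/
def IdxMatching {V : Type*} {n : ℕ} (G : SimpleGraph V) (N : G.edgeSet ≃ Fin n)
    (M : Finset (Fin n)) : Prop :=
  ∀ i ∈ M, ∀ j ∈ M, i ≠ j →
    ∀ v : V, ¬(v ∈ (↑(N.symm i) : Sym2 V) ∧ v ∈ (↑(N.symm j) : Sym2 V))

/-! ### Auxiliary lemmas -/

section EdgeIdx
variable {V : Type*} {n : ℕ} {G : SimpleGraph V} (N : G.edgeSet ≃ Fin n)

lemma mem_edgeIdx {x y : V} {p : G.Walk x y} {i : Fin n} :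
    i ∈ edgeIdx N p ↔ (↑(N.symm i) : Sym2 V) ∈ p.edges := by
  simp only [edgeIdx, List.mem_pmap]
  constructor
  · rintro ⟨e, he, rfl⟩; simpa using he
  · intro h; exact ⟨_, h, by simp⟩

lemma length_edgeIdx {x y : V} (p : G.Walk x y) :
    (edgeIdx N p).length = p.length := by
  simp [edgeIdx, List.length_pmap]

lemma nodup_edgeIdx {x y : V} {p : G.Walk x y} (h : p.edges.Nodup) :
    (edgeIdx N p).Nodup :=
  h.pmap (fun a _ b _ hab => by simpa [Subtype.ext_iff] using N.injective hab)

lemma edgeIdx_cons {x y z : V} (h : G.Adj x y) (p : G.Walk y z) :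
    edgeIdx N (SimpleGraph.Walk.cons h p) = N ⟨s(x,y), h⟩ :: edgeIdx N p := by
  simp only [edgeIdx, SimpleGraph.Walk.edges_cons, List.pmap]

lemma edgeIdx_reverse_mem {x y : V} (p : G.Walk x y) (i : Fin n) :
    i ∈ edgeIdx N p.reverse ↔ i ∈ edgeIdx N p := by
  simp [mem_edgeIdx]

lemma first_edge_at_start {x y : V} (p : G.Walk x y) (h : 0 < p.length) :
    ∃ i ∈ edgeIdx N p, x ∈ (↑(N.symm i) : Sym2 V) := by
  cases p with
  | nil => simp at h
  | cons hadj q =>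
      refine ⟨_, by rw [edgeIdx_cons]; exact List.mem_cons_self, ?_⟩
      simp

lemma last_edge_at_end {x y : V} (p : G.Walk x y) (h : 0 < p.length) :
    ∃ i ∈ edgeIdx N p, y ∈ (↑(N.symm i) : Sym2 V) := by
  obtain ⟨i, hi, hyi⟩ := first_edge_at_start N p.reverse (by simpa using h)
  exact ⟨i, by rwa [edgeIdx_reverse_mem] at hi, hyi⟩

lemma edgeIdx_nil {x : V} : edgeIdx N (SimpleGraph.Walk.nil : G.Walk x x) = [] := rfl

lemma head_edgeIdx {x y : V} (p : G.Walk x y) (h : edgeIdx N p ≠ []) :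
    x ∈ (↑(N.symm ((edgeIdx N p).head h)) : Sym2 V) := by
  cases p with
  | nil => simp [edgeIdx] at h
  | cons hadj q => simp [edgeIdx_cons]

lemma getLast_edgeIdx : ∀ {x y : V} (p : G.Walk x y) (h : edgeIdx N p ≠ []),
    y ∈ (↑(N.symm ((edgeIdx N p).getLast h)) : Sym2 V) := by
  intro x y p
  induction p with
  | nil => intro h; simp [edgeIdx] at h
  | @cons x w y hadj q ih =>
      intro h
      cases q with
      | nil => simp [edgeIdx_cons, edgeIdx_nil]
      | cons h' q' =>
          have hne : edgeIdx N (SimpleGraph.Walk.cons h' q') ≠ [] := by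
            rw [edgeIdx_cons]; simp
          have heq : (edgeIdx N (SimpleGraph.Walk.cons hadj
              (SimpleGraph.Walk.cons h' q'))).getLast h
              = (edgeIdx N (SimpleGraph.Walk.cons h' q')).getLast hne := by
            simp only [edgeIdx_cons N hadj]
            exact List.getLast_cons hne
          rw [heq]
          exact ih hne

lemma chain'_edgeIdx {x y : V} (p : G.Walk x y) :
    (edgeIdx N p).Chain'
      (fun i j => ∃ v, v ∈ (↑(N.symm i) : Sym2 V) ∧ v ∈ (↑(N.symm j) : Sym2 V)) := by
  induction p with
  | nil => simp [edgeIdx, List.Chain']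
  | @cons u w y hadj q ih =>
      cases q with
      | nil => simp [edgeIdx, List.Chain']
      | @cons w w2 y h' q' =>
          rw [edgeIdx_cons] at ih ⊢
          rw [edgeIdx_cons, List.Chain', List.isChain_cons_cons]
          exact ⟨⟨w, by simp, by simp⟩, ih⟩

lemma mem_support_of_mem_edge {x y : V} {p : G.Walk x y} {e : Sym2 V}
    (he : e ∈ p.edges) {v : V} (hv : v ∈ e) : v ∈ p.support := by
  obtain ⟨w, rfl⟩ := Sym2.mem_iff_exists.mp hv
  exact p.fst_mem_support_of_mem_edges he

end EdgeIdx
section TwoEdges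
variable {V : Type*} {n : ℕ} {G : SimpleGraph V} (N : G.edgeSet ≃ Fin n)

lemma two_at_interior {x y : V} (p : G.Walk x y) (hp : p.IsPath) (v : V)
    (hv : v ∈ p.support) (hvx : v ≠ x) (hvy : v ≠ y) :
    ∃ i ∈ edgeIdx N p, ∃ j ∈ edgeIdx N p, i ≠ j ∧
      v ∈ (↑(N.symm i) : Sym2 V) ∧ v ∈ (↑(N.symm j) : Sym2 V) := by
  induction p with
  | nil => simp at hv; exact absurd hv hvx
  | @cons u w y hadj q ih =>
      rw [SimpleGraph.Walk.support_cons, List.mem_cons] at hv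
      rcases hv with rfl | hv
      · exact absurd rfl hvx
      · rcases eq_or_ne v w with rfl | hvw
        · cases q with
          | nil => exact absurd (by simpa using hv) hvy
          | @cons w w2 y h' q' =>
              refine ⟨N ⟨s(u,v), hadj⟩, ?_, N ⟨s(v,w2), h'⟩, ?_, ?_, by simp, by simp⟩
              · rw [edgeIdx_cons]; exact List.mem_cons_self
              · rw [edgeIdx_cons, edgeIdx_cons]
                exact List.mem_cons_of_mem _ (List.mem_cons_self)
              · intro hij
                have hE : s(u,v) = s(v,w2) := Subtype.ext_iff.1 (N.injective hij)
                have : s(u,v) ∈ (SimpleGraph.Walk.cons h' q').edges := by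
                  rw [hE]; simp
                have := SimpleGraph.Walk.fst_mem_support_of_mem_edges _ this
                exact ((SimpleGraph.Walk.cons_isPath_iff _ _).1 hp).2 this
        · have hq : q.IsPath := ((SimpleGraph.Walk.cons_isPath_iff _ _).1 hp).1
          obtain ⟨i, hi, j, hj, hne, h1, h2⟩ := ih hq hv hvw hvy
          rw [edgeIdx_cons]
          exact ⟨i, List.mem_cons_of_mem _ hi, j, List.mem_cons_of_mem _ hj, hne, h1, h2⟩

lemma two_at_cycle {x : V} (p : G.Walk x x) (hp : p.IsCycle) (v : V)
    (hv : v ∈ p.support) :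
    ∃ i ∈ edgeIdx N p, ∃ j ∈ edgeIdx N p, i ≠ j ∧
      v ∈ (↑(N.symm i) : Sym2 V) ∧ v ∈ (↑(N.symm j) : Sym2 V) := by
  cases p with
  | nil => exact absurd hp (SimpleGraph.Walk.IsCycle.not_of_nil)
  | @cons _ w _ hadj q =>
      obtain ⟨hqpath, hne⟩ := (SimpleGraph.Walk.cons_isCycle_iff _ _).1 hp
      have hql : 0 < q.length := by
        have := hp.three_le_length
        rw [SimpleGraph.Walk.length_cons] at this; omega
      rcases eq_or_ne v x with rfl | hvx
      · obtain ⟨j, hj, hvj⟩ := last_edge_at_end N q hql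
        refine ⟨N ⟨s(v,w), hadj⟩, ?_, j, ?_, ?_, by simp, hvj⟩
        · rw [edgeIdx_cons]; exact List.mem_cons_self
        · rw [edgeIdx_cons]; exact List.mem_cons_of_mem _ hj
        · intro hij
          rw [mem_edgeIdx, ← hij] at hj
          simp at hj
          exact hne hj
      · have hv' : v ∈ q.support := by
          rw [SimpleGraph.Walk.support_cons, List.mem_cons] at hv
          tauto
        rcases eq_or_ne v w with rfl | hvw
        · cases q with
          | nil => simp at hql
          | @cons w w2 y h' q' =>
              refine ⟨N ⟨s(x,v), hadj⟩, ?_, N ⟨s(v,w2), h'⟩, ?_, ?_, by simp, by simp⟩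
              · rw [edgeIdx_cons]; exact List.mem_cons_self
              · rw [edgeIdx_cons, edgeIdx_cons]
                exact List.mem_cons_of_mem _ (List.mem_cons_self)
              · intro hij
                have hE : s(x,v) = s(v,w2) := Subtype.ext_iff.1 (N.injective hij)
                apply hne
                rw [hE]; simp
        · obtain ⟨i, hi, j, hj, hij, h1, h2⟩ := two_at_interior N q hqpath v hv' hvw hvx
          rw [edgeIdx_cons]
          exact ⟨i, List.mem_cons_of_mem _ hi, j, List.mem_cons_of_mem _ hj, hij, h1, h2⟩

end TwoEdges

section listalg
variable {n : ℕ} (M : Finset (Fin n)) (w : Fin n → ℝ)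

/-- alternating evaluation -/
noncomputable def Fval (L : List (Fin n)) : ℝ := ∑ i, altVec L i * w i

lemma Fval_nil : Fval w ([] : List (Fin n)) = 0 := by
  simp [Fval, altVec]

lemma Fval_cons (j : Fin n) (L : List (Fin n)) :
    Fval w (j :: L) = w j - Fval w L := by
  simp only [Fval, altVec, Pi.sub_apply, sub_mul, Finset.sum_sub_distrib]
  congr 1
  rw [Finset.sum_eq_single j]
  · simp
  · intro i _ hij; simp [Pi.single_apply, hij]
  · simp

/-- signed list delta -/
def ldelta (L : List (Fin n)) : ℝ :=
  ((L.filter (fun i => i ∈ M)).map w).sum - ((L.filter (fun i => i ∉ M)).map w).sum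

lemma ldelta_cons (j : Fin n) (L : List (Fin n)) :
    ldelta M w (j :: L) = (if j ∈ M then w j else - w j) + ldelta M w L := by
  by_cases hj : j ∈ M <;> simp [ldelta, List.filter_cons, hj] <;> ring

lemma Fval_eq_ldelta : ∀ (L : List (Fin n)) (j : Fin n),
    (j :: L).Chain' (fun i k => (i ∈ M ↔ k ∉ M)) →
    Fval w (j :: L) = (if j ∈ M then (1:ℝ) else -1) * ldelta M w (j :: L) := by
  intro L
  induction L with
  | nil =>
      intro j _
      by_cases hj : j ∈ M <;>
        simp [Fval_cons, Fval_nil, ldelta_cons, ldelta, hj]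
  | cons k L ih =>
      intro j hch
      rw [List.Chain', List.isChain_cons_cons] at hch
      have hjk := hch.1
      have h2 := ih k hch.2
      rw [Fval_cons, h2, ldelta_cons M w j, ldelta_cons M w k]
      by_cases hj : j ∈ M
      · have hk : k ∉ M := hjk.1 hj
        simp only [if_pos hj, if_neg hk]
        ring
      · have hk : k ∈ M := by by_contra hk; exact hj (hjk.2 hk)
        simp only [if_neg hj, if_pos hk]
        ring

lemma lastside : ∀ (L : List (Fin n)) (j : Fin n),
    (j :: L).Chain' (fun i k => (i ∈ M ↔ k ∉ M)) →
    ((j :: L).getLast (by simp) ∈ M ↔ (j ∈ M ↔ Even L.length)) := by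
  intro L
  induction L with
  | nil => intro j _; simp
  | cons k L ih =>
      intro j hch
      rw [List.Chain', List.isChain_cons_cons] at hch
      have h2 := ih k hch.2
      rw [List.getLast_cons (by simp)]
      rw [h2]
      have hjk := hch.1
      simp only [List.length_cons, Nat.even_add_one]
      tauto

end listalg

section listalg2
variable {n : ℕ} (M : Finset (Fin n)) (w : Fin n → ℝ)

lemma ldelta_eq_finset {L : List (Fin n)} (h : L.Nodup) :
    ldelta M w L = ∑ i ∈ L.toFinset.filter (fun i => i ∈ M), w i
      - ∑ i ∈ L.toFinset.filter (fun i => i ∉ M), w i := by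
  rw [ldelta]
  rw [← List.sum_toFinset w (h.filter _), ← List.sum_toFinset w (h.filter _)]
  rw [List.toFinset_filter, List.toFinset_filter]
  simp

end listalg2


section matchings
variable {V : Type*} {n : ℕ} {G : SimpleGraph V} (N : G.edgeSet ≃ Fin n)
variable {M M' : Finset (Fin n)}

lemma chain_alt (hM : IdxMatching G N M) (hM' : IdxMatching G N M') :
    ∀ L : List (Fin n), L.Nodup → (∀ i ∈ L, i ∈ symmDiff M M') →
    L.Chain' (fun i j => ∃ v, v ∈ (↑(N.symm i) : Sym2 V) ∧ v ∈ (↑(N.symm j) : Sym2 V)) →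
    L.Chain' (fun i j => (i ∈ M ↔ j ∉ M)) := by
  intro L
  induction L with
  | nil => simp [List.Chain']
  | cons i l ih =>
      intro hnd hmem hch
      cases l with
      | nil => simp [List.Chain']
      | cons j l' =>
          rw [List.Chain', List.isChain_cons_cons] at hch ⊢
          obtain ⟨⟨v, hvi, hvj⟩, hch2⟩ := hch
          have hij : i ≠ j := by
            intro h; rw [List.nodup_cons] at hnd; exact hnd.1 (h ▸ List.mem_cons_self)
          have hiD := hmem i (List.mem_cons_self)
          have hjD := hmem j (List.mem_cons_of_mem _ (List.mem_cons_self))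
          rw [Finset.mem_symmDiff] at hiD hjD
          constructor
          · constructor
            · intro hi hjM
              rcases hjD with ⟨hj, _⟩ | ⟨_, hj⟩
              · exact hM i hi j hj hij v ⟨hvi, hvj⟩
              · exact hj hjM
            · intro hj
              rcases hiD with ⟨hi, _⟩ | ⟨hi', hi⟩
              · exact hi
              · exfalso
                rcases hjD with ⟨hjm, _⟩ | ⟨hj', _⟩
                · exact hj hjm
                · exact hM' i hi' j hj' hij v ⟨hvi, hvj⟩
          · exact ih hnd.of_cons
              (fun k hk => hmem k (List.mem_cons_of_mem _ hk)) hch2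

/-- Key property: every vertex of a `C`-edge either lies on another `C`-edge,
or all symmDiff-edges at it are in `C`. -/
def SatProp (C : Finset (Fin n)) : Prop :=
  ∀ v : V, ∀ j ∈ C, v ∈ (↑(N.symm j) : Sym2 V) →
    ((∃ k ∈ C, k ≠ j ∧ v ∈ (↑(N.symm k) : Sym2 V)) ∨
     (∀ i ∈ symmDiff M M', v ∈ (↑(N.symm i) : Sym2 V) → i ∈ C))

lemma delta_matching (hM : IdxMatching G N M) (hM' : IdxMatching G N M')
    {C : Finset (Fin n)} (hC : C ⊆ symmDiff M M') (hP : SatProp N (M := M) (M' := M') C) :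
    IdxMatching G N (symmDiff M C) := by
  intro i hi j hj hij v ⟨hvi, hvj⟩
  rw [Finset.mem_symmDiff] at hi hj
  -- each element of C is in exactly one of M, M'
  have hside : ∀ k ∈ C, (k ∈ M ∧ k ∉ M') ∨ (k ∈ M' ∧ k ∉ M) := by
    intro k hk
    have := hC hk
    rw [Finset.mem_symmDiff] at this
    tauto
  -- case analysis
  rcases hi with ⟨hiM, hiC⟩ | ⟨hiC, hiM⟩ <;> rcases hj with ⟨hjM, hjC⟩ | ⟨hjC, hjM⟩
  · exact hM i hiM j hjM hij v ⟨hvi, hvj⟩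
  · -- i ∈ M \ C, j ∈ C \ M
    have hjM' : j ∈ M' := by rcases hside j hjC with ⟨h1, _⟩ | ⟨h1, _⟩ <;> tauto
    rcases hP v j hjC hvj with ⟨k, hkC, hkj, hvk⟩ | hsat
    · -- k is the other C-edge at v; k must be in M
      have hkM : k ∈ M := by
        rcases hside k hkC with ⟨h1, _⟩ | ⟨h1, h2⟩
        · exact h1
        · exact absurd ⟨hvk, hvj⟩ (hM' k h1 j hjM' hkj v)
      have hki : k ≠ i := fun h => hiC (h ▸ hkC)
      exact hM k hkM i hiM hki v ⟨hvk, hvi⟩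
    · -- v saturated: i must be in C, contradiction
      have hiM' : i ∉ M' := fun h => hM' i h j hjM' hij v ⟨hvi, hvj⟩
      have : i ∈ symmDiff M M' := by rw [Finset.mem_symmDiff]; tauto
      exact hiC (hsat i this hvi)
  · -- symmetric: j ∈ M \ C, i ∈ C \ M
    have hiM' : i ∈ M' := by rcases hside i hiC with ⟨h1, _⟩ | ⟨h1, _⟩ <;> tauto
    rcases hP v i hiC hvi with ⟨k, hkC, hki, hvk⟩ | hsat
    · have hkM : k ∈ M := by
        rcases hside k hkC with ⟨h1, _⟩ | ⟨h1, h2⟩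
        · exact h1
        · exact absurd ⟨hvk, hvi⟩ (hM' k h1 i hiM' hki v)
      have hkj : k ≠ j := fun h => hjC (h ▸ hkC)
      exact hM k hkM j hjM hkj v ⟨hvk, hvj⟩
    · have hjM' : j ∉ M' := fun h => hM' j h i hiM' (Ne.symm hij) v ⟨hvj, hvi⟩
      have : j ∈ symmDiff M M' := by rw [Finset.mem_symmDiff]; tauto
      exact hjC (hsat j this hvj)
  · -- both in C \ M, hence both in M'
    have hiM' : i ∈ M' := by rcases hside i hiC with ⟨h1, _⟩ | ⟨h1, _⟩ <;> tauto
    have hjM' : j ∈ M' := by rcases hside j hjC with ⟨h1, _⟩ | ⟨h1, _⟩ <;> tauto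
    exact hM' i hiM' j hjM' hij v ⟨hvi, hvj⟩

end matchings

section core
variable {V : Type*} {n : ℕ} {G : SimpleGraph V} (N : G.edgeSet ≃ Fin n)
variable {M M' : Finset (Fin n)}

lemma opp_sides (hM : IdxMatching G N M) (hM' : IdxMatching G N M')
    {i j : Fin n} (hi : i ∈ symmDiff M M') (hj : j ∈ symmDiff M M') (hij : i ≠ j)
    {v : V} (h1 : v ∈ (↑(N.symm i) : Sym2 V)) (h2 : v ∈ (↑(N.symm j) : Sym2 V)) :
    (i ∈ M ↔ j ∉ M) := by
  rw [Finset.mem_symmDiff] at hi hj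
  constructor
  · intro hiM hjM
    rcases hj with ⟨hj1, _⟩ | ⟨_, hj2⟩
    · exact hM i hiM j hj1 hij v ⟨h1, h2⟩
    · exact hj2 hjM
  · intro hjM
    rcases hi with ⟨hi1, _⟩ | ⟨hi1, hi2⟩
    · exact hi1
    · exfalso
      rcases hj with ⟨hj1, _⟩ | ⟨hj1, _⟩
      · exact hjM hj1
      · exact hM' i hi1 j hj1 hij v ⟨h1, h2⟩

lemma satProp_comm {C : Finset (Fin n)} (h : SatProp N (M := M) (M' := M') C) :
    SatProp N (M := M') (M' := M) C := by
  intro v j hj hv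
  rcases h v j hj hv with h1 | h1
  · exact Or.inl h1
  · refine Or.inr fun i hi hvi => h1 i ?_ hvi
    rwa [symmDiff_comm]

/-- signed weight difference of a finset of indices, relative to `M`. -/
noncomputable def dlt (M C : Finset (Fin n)) (w : Fin n → ℝ) : ℝ :=
  ∑ i ∈ C.filter (fun i => i ∈ M), w i - ∑ i ∈ C.filter (fun i => i ∉ M), w i

def GrowResult (G : SimpleGraph V) (N : G.edgeSet ≃ Fin n)
    (M M' : Finset (Fin n)) (a b : Fin n → ℝ) : Prop :=
  ∃ C : Finset (Fin n), C.Nonempty ∧ C ⊆ symmDiff M M' ∧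
    IdxMatching G N (symmDiff M C) ∧ IdxMatching G N (symmDiff M' C) ∧
    ((0 < dlt M C a ∧ 0 < dlt M C b) ∨ (dlt M C a < 0 ∧ dlt M C b < 0))

lemma cycle_even (hM : IdxMatching G N M) (hM' : IdxMatching G N M')
    {x : V} (p : G.Walk x x) (hp : p.IsCycle)
    (hmem : ∀ i ∈ edgeIdx N p, i ∈ symmDiff M M') : Even p.length := by
  have hnd : (edgeIdx N p).Nodup := nodup_edgeIdx N hp.isTrail.edges_nodup
  have hlenL : (edgeIdx N p).length = p.length := length_edgeIdx N p
  have h3 := hp.three_le_length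
  have hne : edgeIdx N p ≠ [] := by
    intro h; rw [h] at hlenL; simp at hlenL; omega
  have hchain := chain_alt N hM hM' (edgeIdx N p) hnd hmem (chain'_edgeIdx N p)
  obtain ⟨j, rest, hL⟩ := List.exists_cons_of_ne_nil hne
  have hrest : rest ≠ [] := by
    intro h
    rw [hL, h] at hlenL
    simp at hlenL; omega
  have hhead : x ∈ (↑(N.symm j) : Sym2 V) := by
    have := head_edgeIdx N p hne
    rwa [show (edgeIdx N p).head hne = j by rw [List.head_eq_iff_head?_eq_some, hL]; rfl] at this
  have hlast0 := getLast_edgeIdx N p hne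
  set k := (edgeIdx N p).getLast hne with hk
  have hkmem : k ∈ edgeIdx N p := List.getLast_mem hne
  have hkrest : k ∈ rest := by
    have : (edgeIdx N p).getLast hne = rest.getLast hrest := by
      rw [List.getLast_congr _ (by simp) hL, List.getLast_cons hrest]
    rw [hk, this]
    exact List.getLast_mem hrest
  have hjk : j ≠ k := by
    intro h
    rw [hL, List.nodup_cons] at hnd
    exact hnd.1 (h ▸ hkrest)
  have hopp : (j ∈ M ↔ k ∉ M) :=
    opp_sides N hM hM' (hmem j (hL ▸ List.mem_cons_self)) (hmem k hkmem) hjk hhead hlast0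
  have hlastside : ((j :: rest).getLast (by simp) ∈ M ↔ (j ∈ M ↔ Even rest.length)) :=
    lastside M rest j (hL ▸ hchain)
  have hkval : (j :: rest).getLast (by simp) = k := by
    rw [hk, List.getLast_congr _ _ hL]
  rw [hkval] at hlastside
  have hplen : p.length = rest.length + 1 := by
    rw [← hlenL, hL]; simp
  rw [hplen, Nat.even_add_one]
  tauto

end core

section core2
variable {V : Type*} {n : ℕ} {G : SimpleGraph V} (N : G.edgeSet ≃ Fin n)
variable {M M' : Finset (Fin n)}

lemma conclude (hM : IdxMatching G N M) (hM' : IdxMatching G N M') (a b : Fin n → ℝ)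
    {x y : V} (p : G.Walk x y)
    (hnd : (edgeIdx N p).Nodup) (hne : edgeIdx N p ≠ [])
    (hmem : ∀ i ∈ edgeIdx N p, i ∈ symmDiff M M')
    (hsat : SatProp N (M := M) (M' := M') (edgeIdx N p).toFinset)
    (hsgn : (0 < Fval a (edgeIdx N p) ∧ 0 < Fval b (edgeIdx N p)) ∨
            (Fval a (edgeIdx N p) < 0 ∧ Fval b (edgeIdx N p) < 0)) :
    GrowResult G N M M' a b := by
  set L := edgeIdx N p with hLdef
  set C := L.toFinset with hCdef
  have hCD : C ⊆ symmDiff M M' := fun i hi => hmem i (List.mem_toFinset.mp hi)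
  have hCne : C.Nonempty := by
    obtain ⟨j, rest, hL⟩ := List.exists_cons_of_ne_nil hne
    exact ⟨j, by rw [hCdef, hL]; simp⟩
  have hchain := chain_alt N hM hM' L hnd hmem (chain'_edgeIdx N p)
  have hCD' : C ⊆ symmDiff M' M := by rwa [symmDiff_comm]
  refine ⟨C, hCne, hCD, delta_matching N hM hM' hCD hsat,
    delta_matching N hM' hM hCD' (satProp_comm N hsat), ?_⟩
  obtain ⟨j, rest, hL⟩ := List.exists_cons_of_ne_nil hne
  have heva : Fval a L = (if j ∈ M then (1:ℝ) else -1) * ldelta M a L := by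
    rw [hL]; exact Fval_eq_ldelta M a rest j (hL ▸ hchain)
  have hevb : Fval b L = (if j ∈ M then (1:ℝ) else -1) * ldelta M b L := by
    rw [hL]; exact Fval_eq_ldelta M b rest j (hL ▸ hchain)
  have hld : ∀ w : Fin n → ℝ, ldelta M w L = dlt M C w := by
    intro w
    rw [ldelta_eq_finset M w hnd, dlt, hCdef]
  rw [hld] at heva hevb
  by_cases hj : j ∈ M
  · rw [if_pos hj, one_mul] at heva hevb
    rw [← heva, ← hevb]
    exact hsgn
  · rw [if_neg hj, neg_one_mul] at heva hevb
    rcases hsgn with ⟨h1, h2⟩ | ⟨h1, h2⟩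
    · right
      rw [heva] at h1; rw [hevb] at h2
      constructor <;> linarith
    · left
      rw [heva] at h1; rw [hevb] at h2
      constructor <;> linarith

lemma finish_path (hM : IdxMatching G N M) (hM' : IdxMatching G N M') (a b : Fin n → ℝ)
    (hr1 : ∀ (x y : V) (p : G.Walk x y), 0 < p.length → p.IsPath →
        ((0 < ∑ i, altVec (edgeIdx N p) i * a i ∧ 0 < ∑ i, altVec (edgeIdx N p) i * b i) ∨
         (∑ i, altVec (edgeIdx N p) i * a i < 0 ∧ ∑ i, altVec (edgeIdx N p) i * b i < 0)))
    {x y : V} (p : G.Walk x y) (hp : p.IsPath) (hlen : 0 < p.length)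
    (hmem : ∀ i ∈ edgeIdx N p, i ∈ symmDiff M M')
    (hsatx : ∀ i ∈ symmDiff M M', x ∈ (↑(N.symm i) : Sym2 V) → i ∈ edgeIdx N p)
    (hsaty : ∀ i ∈ symmDiff M M', y ∈ (↑(N.symm i) : Sym2 V) → i ∈ edgeIdx N p) :
    GrowResult G N M M' a b := by
  have hne : edgeIdx N p ≠ [] := by
    intro h
    have := length_edgeIdx N p
    rw [h] at this; simp at this; omega
  refine conclude N hM hM' a b p (nodup_edgeIdx N hp.isTrail.edges_nodup) hne hmem ?_ ?_
  · intro v j hj hv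
    have hjL : j ∈ edgeIdx N p := List.mem_toFinset.mp hj
    have hedge : (↑(N.symm j) : Sym2 V) ∈ p.edges := (mem_edgeIdx N).mp hjL
    have hvsup : v ∈ p.support := mem_support_of_mem_edge hedge hv
    rcases eq_or_ne v x with rfl | hvx
    · exact Or.inr fun i hi hvi => List.mem_toFinset.mpr (hsatx i hi hvi)
    rcases eq_or_ne v y with rfl | hvy
    · exact Or.inr fun i hi hvi => List.mem_toFinset.mpr (hsaty i hi hvi)
    obtain ⟨i, hiL, j', hj'L, hij', h1, h2⟩ := two_at_interior N p hp v hvsup hvx hvy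
    rcases eq_or_ne i j with rfl | hij
    · exact Or.inl ⟨j', List.mem_toFinset.mpr hj'L, fun h => hij' h.symm, h2⟩
    · exact Or.inl ⟨i, List.mem_toFinset.mpr hiL, hij, h1⟩
  · have := hr1 x y p hlen hp
    simpa [Fval] using this

lemma finish_cycle (hM : IdxMatching G N M) (hM' : IdxMatching G N M') (a b : Fin n → ℝ)
    (hr2 : ∀ (x : V) (p : G.Walk x x), p.IsCycle → Even p.length →
        ((0 < ∑ i, altVec (edgeIdx N p) i * a i ∧ 0 < ∑ i, altVec (edgeIdx N p) i * b i) ∨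
         (∑ i, altVec (edgeIdx N p) i * a i < 0 ∧ ∑ i, altVec (edgeIdx N p) i * b i < 0)))
    {x : V} (p : G.Walk x x) (hp : p.IsCycle)
    (hmem : ∀ i ∈ edgeIdx N p, i ∈ symmDiff M M') :
    GrowResult G N M M' a b := by
  have hlen3 := hp.three_le_length
  have hne : edgeIdx N p ≠ [] := by
    intro h
    have := length_edgeIdx N p
    rw [h] at this; simp at this; omega
  have heven := cycle_even N hM hM' p hp hmem
  refine conclude N hM hM' a b p (nodup_edgeIdx N hp.isTrail.edges_nodup) hne hmem ?_ ?_
  · intro v j hj hv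
    have hjL : j ∈ edgeIdx N p := List.mem_toFinset.mp hj
    have hedge : (↑(N.symm j) : Sym2 V) ∈ p.edges := (mem_edgeIdx N).mp hjL
    have hvsup : v ∈ p.support := mem_support_of_mem_edge hedge hv
    obtain ⟨i, hiL, j', hj'L, hij', h1, h2⟩ := two_at_cycle N p hp v hvsup
    rcases eq_or_ne i j with rfl | hij
    · exact Or.inl ⟨j', List.mem_toFinset.mpr hj'L, fun h => hij' h.symm, h2⟩
    · exact Or.inl ⟨i, List.mem_toFinset.mpr hiL, hij, h1⟩
  · have := hr2 x p hp heven
    simpa [Fval] using this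

lemma extend_step (hM : IdxMatching G N M) (hM' : IdxMatching G N M') (a b : Fin n → ℝ)
    (hr2 : ∀ (x : V) (p : G.Walk x x), p.IsCycle → Even p.length →
        ((0 < ∑ i, altVec (edgeIdx N p) i * a i ∧ 0 < ∑ i, altVec (edgeIdx N p) i * b i) ∨
         (∑ i, altVec (edgeIdx N p) i * a i < 0 ∧ ∑ i, altVec (edgeIdx N p) i * b i < 0)))
    {x y : V} (p : G.Walk x y) (hp : p.IsPath) (hlen : 0 < p.length)
    (hmem : ∀ i ∈ edgeIdx N p, i ∈ symmDiff M M')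
    {i : Fin n} (hiD : i ∈ symmDiff M M') (hiL : i ∉ edgeIdx N p)
    (hxi : x ∈ (↑(N.symm i) : Sym2 V)) :
    GrowResult G N M M' a b ∨
      ∃ (z : V) (p' : G.Walk z y), p'.IsPath ∧ 0 < p'.length ∧
        (∀ k ∈ edgeIdx N p', k ∈ symmDiff M M') ∧
        p'.length = p.length + 1 := by
  obtain ⟨z, hez⟩ : ∃ z, (↑(N.symm i) : Sym2 V) = s(x, z) := Sym2.mem_iff_exists.mp hxi
  have hadj : G.Adj x z := by
    rw [← SimpleGraph.mem_edgeSet, ← hez]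
    exact (N.symm i).2
  have hidx : N ⟨s(z,x), hadj.symm⟩ = i := by
    have : (⟨s(z,x), hadj.symm⟩ : G.edgeSet) = N.symm i := by
      apply Subtype.ext
      rw [hez]
      exact Sym2.eq_swap
    rw [this, Equiv.apply_symm_apply]
  by_cases hz : z ∈ p.support
  · -- the new edge closes up; z must equal y, giving an even cycle
    left
    have hzx : z ≠ x := hadj.ne'
    have hzy : z = y := by
      by_contra hzy
      obtain ⟨k1, hk1, k2, hk2, hk12, h1, h2⟩ := two_at_interior N p hp z hz hzx hzy
      have hk1D := hmem k1 hk1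
      have hk2D := hmem k2 hk2
      have hzi : z ∈ (↑(N.symm i) : Sym2 V) := by rw [hez]; simp
      have hopp : (k1 ∈ M ↔ k2 ∉ M) := opp_sides N hM hM' hk1D hk2D hk12 h1 h2
      rw [Finset.mem_symmDiff] at hiD
      rcases hiD with ⟨hiM, hiM'⟩ | ⟨hiM', hiM⟩
      · -- i ∈ M; one of k1 k2 is in M
        by_cases hk1M : k1 ∈ M
        · exact hM i hiM k1 hk1M (fun h => hiL (h ▸ hk1)) z ⟨hzi, h1⟩
        · have : k2 ∈ M := by tauto
          exact hM i hiM k2 this (fun h => hiL (h ▸ hk2)) z ⟨hzi, h2⟩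
      · -- i ∈ M'; one of k1 k2 is in M'
        have hside : ∀ k, k ∈ edgeIdx N p → k ∉ M → k ∈ M' := by
          intro k hk hkM
          have := hmem k hk
          rw [Finset.mem_symmDiff] at this
          tauto
        by_cases hk1M : k1 ∈ M
        · have hk2M' : k2 ∈ M' := hside k2 hk2 (by tauto)
          exact hM' i hiM' k2 hk2M' (fun h => hiL (h ▸ hk2)) z ⟨hzi, h2⟩
        · have hk1M' : k1 ∈ M' := hside k1 hk1 hk1M
          exact hM' i hiM' k1 hk1M' (fun h => hiL (h ▸ hk1)) z ⟨hzi, h1⟩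
    subst hzy
    -- cycle: cons (hadj.symm : G.Adj z x) p : G.Walk z z
    have hnotmem : s(z, x) ∉ p.edges := by
      intro h
      apply hiL
      rw [mem_edgeIdx, hez]
      rwa [Sym2.eq_swap] at h
    have hcyc : (SimpleGraph.Walk.cons hadj.symm p).IsCycle :=
      (SimpleGraph.Walk.cons_isCycle_iff p hadj.symm).mpr ⟨hp, hnotmem⟩
    apply finish_cycle N hM hM' a b hr2 _ hcyc
    intro k hk
    rw [edgeIdx_cons, List.mem_cons] at hk
    rcases hk with rfl | hk
    · rwa [hidx]
    · exact hmem k hk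
  · -- extend the path
    right
    refine ⟨z, SimpleGraph.Walk.cons hadj.symm p, ?_, ?_, ?_, ?_⟩
    · rw [SimpleGraph.Walk.cons_isPath_iff]
      exact ⟨hp, hz⟩
    · simp
    · intro k hk
      rw [edgeIdx_cons, List.mem_cons] at hk
      rcases hk with rfl | hk
      · rwa [hidx]
      · exact hmem k hk
    · simp

lemma grow (hM : IdxMatching G N M) (hM' : IdxMatching G N M') (a b : Fin n → ℝ)
    (hr1 : ∀ (x y : V) (p : G.Walk x y), 0 < p.length → p.IsPath →
        ((0 < ∑ i, altVec (edgeIdx N p) i * a i ∧ 0 < ∑ i, altVec (edgeIdx N p) i * b i) ∨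
         (∑ i, altVec (edgeIdx N p) i * a i < 0 ∧ ∑ i, altVec (edgeIdx N p) i * b i < 0)))
    (hr2 : ∀ (x : V) (p : G.Walk x x), p.IsCycle → Even p.length →
        ((0 < ∑ i, altVec (edgeIdx N p) i * a i ∧ 0 < ∑ i, altVec (edgeIdx N p) i * b i) ∨
         (∑ i, altVec (edgeIdx N p) i * a i < 0 ∧ ∑ i, altVec (edgeIdx N p) i * b i < 0))) :
    ∀ (m : ℕ) {x y : V} (p : G.Walk x y),
      p.IsPath → 0 < p.length → (∀ i ∈ edgeIdx N p, i ∈ symmDiff M M') →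
      (symmDiff M M').card ≤ m + p.length → GrowResult G N M M' a b := by
  intro m
  induction m with
  | zero =>
      intro x y p hp hlen hmem hcard
      have hsub : (edgeIdx N p).toFinset ⊆ symmDiff M M' :=
        fun i hi => hmem i (List.mem_toFinset.mp hi)
      have hnd : (edgeIdx N p).Nodup := nodup_edgeIdx N hp.isTrail.edges_nodup
      have hcardL : (edgeIdx N p).toFinset.card = p.length := by
        rw [List.toFinset_card_of_nodup hnd, length_edgeIdx]
      have heq : symmDiff M M' = (edgeIdx N p).toFinset :=
        (Finset.eq_of_subset_of_card_le hsub (by omega)).symm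
      have hs : ∀ i ∈ symmDiff M M', i ∈ edgeIdx N p := by
        intro i hi
        rw [heq] at hi
        exact List.mem_toFinset.mp hi
      exact finish_path N hM hM' a b hr1 p hp hlen hmem
        (fun i hi _ => hs i hi) (fun i hi _ => hs i hi)
  | succ m ih =>
      intro x y p hp hlen hmem hcard
      by_cases hx : ∃ i, i ∈ symmDiff M M' ∧ i ∉ edgeIdx N p ∧ x ∈ (↑(N.symm i) : Sym2 V)
      · obtain ⟨i, hiD, hiL, hxi⟩ := hx
        rcases extend_step N hM hM' a b hr2 p hp hlen hmem hiD hiL hxi with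
          res | ⟨z, p', hp', hlen', hmem', hplen⟩
        · exact res
        · exact ih p' hp' hlen' hmem' (by omega)
      by_cases hy : ∃ i, i ∈ symmDiff M M' ∧ i ∉ edgeIdx N p ∧ y ∈ (↑(N.symm i) : Sym2 V)
      · obtain ⟨i, hiD, hiL, hyi⟩ := hy
        have hiL' : i ∉ edgeIdx N p.reverse := fun h => hiL ((edgeIdx_reverse_mem N p i).mp h)
        have hmem' : ∀ k ∈ edgeIdx N p.reverse, k ∈ symmDiff M M' :=
          fun k hk => hmem k ((edgeIdx_reverse_mem N p k).mp hk)
        rcases extend_step N hM hM' a b hr2 p.reverse hp.reverse (by simpa using hlen)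
            hmem' hiD hiL' hyi with res | ⟨z, p', hp', hlen', hmem'', hplen⟩
        · exact res
        · refine ih p' hp' hlen' hmem'' ?_
          rw [hplen, SimpleGraph.Walk.length_reverse]
          omega
      push_neg at hx hy
      exact finish_path N hM hM' a b hr1 p hp hlen hmem
        (fun i hi hxi => by by_contra h; exact hx i hi h hxi)
        (fun i hi hyi => by by_contra h; exact hy i hi h hyi)

lemma exists_component (hM : IdxMatching G N M) (hM' : IdxMatching G N M') (a b : Fin n → ℝ)
    (hr1 : ∀ (x y : V) (p : G.Walk x y), 0 < p.length → p.IsPath →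
        ((0 < ∑ i, altVec (edgeIdx N p) i * a i ∧ 0 < ∑ i, altVec (edgeIdx N p) i * b i) ∨
         (∑ i, altVec (edgeIdx N p) i * a i < 0 ∧ ∑ i, altVec (edgeIdx N p) i * b i < 0)))
    (hr2 : ∀ (x : V) (p : G.Walk x x), p.IsCycle → Even p.length →
        ((0 < ∑ i, altVec (edgeIdx N p) i * a i ∧ 0 < ∑ i, altVec (edgeIdx N p) i * b i) ∨
         (∑ i, altVec (edgeIdx N p) i * a i < 0 ∧ ∑ i, altVec (edgeIdx N p) i * b i < 0)))
    (hMM' : M ≠ M') : GrowResult G N M M' a b := by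
  have hD : (symmDiff M M').Nonempty := by
    rw [Finset.nonempty_iff_ne_empty]
    intro h
    exact hMM' (symmDiff_eq_bot.mp h)
  obtain ⟨i₀, hi₀⟩ := hD
  obtain ⟨w, hw⟩ := Sym2.mem_iff_exists.mp (Sym2.out_fst_mem (↑(N.symm i₀) : Sym2 V))
  set u := (↑(N.symm i₀) : Sym2 V).out.1 with hu
  have hadj : G.Adj u w := by
    rw [← SimpleGraph.mem_edgeSet, ← hw]
    exact (N.symm i₀).2
  have hp : (SimpleGraph.Walk.cons hadj .nil).IsPath := by
    rw [SimpleGraph.Walk.cons_isPath_iff]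
    exact ⟨SimpleGraph.Walk.IsPath.nil, by simp [hadj.ne]⟩
  have hidx : edgeIdx N (SimpleGraph.Walk.cons hadj .nil) = [i₀] := by
    rw [edgeIdx_cons, edgeIdx_nil]
    congr 1
    have : (⟨s(u,w), hadj⟩ : G.edgeSet) = N.symm i₀ := Subtype.ext hw.symm
    rw [this, Equiv.apply_symm_apply]
  refine grow N hM hM' a b hr1 hr2 (symmDiff M M').card (SimpleGraph.Walk.cons hadj .nil)
    hp (by simp) ?_ (by simp)
  intro i hi
  rw [hidx, List.mem_singleton] at hi
  exact hi ▸ hi₀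

lemma sum_symmDiff_finset (M C : Finset (Fin n)) (w : Fin n → ℝ) :
    ∑ i ∈ symmDiff M C, w i
      = ∑ i ∈ M, w i - ∑ i ∈ C.filter (fun i => i ∈ M), w i
        + ∑ i ∈ C.filter (fun i => i ∉ M), w i := by
  have hd : Disjoint (M \ C) (C \ M) := by
    rw [Finset.disjoint_left]
    intro i hi1 hi2
    rw [Finset.mem_sdiff] at hi1 hi2
    exact hi2.2 hi1.1
  have h1 : symmDiff M C = (M \ C) ∪ (C \ M) := by
    ext i
    rw [Finset.mem_symmDiff, Finset.mem_union, Finset.mem_sdiff, Finset.mem_sdiff]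
  rw [h1, Finset.sum_union hd]
  have h2 : M \ C = M.filter (fun i => i ∉ C) := Finset.sdiff_eq_filter M C
  have h3 : C \ M = C.filter (fun i => i ∉ M) := Finset.sdiff_eq_filter C M
  have h4 : ∑ i ∈ M.filter (fun i => i ∈ C), w i + ∑ i ∈ M.filter (fun i => i ∉ C), w i
      = ∑ i ∈ M, w i := Finset.sum_filter_add_sum_filter_not M _ w
  have h5 : M.filter (fun i => i ∈ C) = C.filter (fun i => i ∈ M) := by
    rw [Finset.filter_mem_eq_inter, Finset.filter_mem_eq_inter, Finset.inter_comm]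
  rw [h2, h3]
  rw [h5] at h4
  linarith

end core2

/-- If the weight vectors `a` and `b` lie in the same region of the matching arrangement
`MA(G, N)` (every alternating form attached to a simple path or even simple cycle takes the
same strict sign at `a` and at `b`), and `M` is the unique maximum-weight matching for the
weights `a`, then `M` is also the unique maximum-weight matching for the weights `b`. -/
theorem same_region_same_max_matching {V : Type*} [Fintype V] [DecidableEq V] {n : ℕ}
    (G : SimpleGraph V) (N : G.edgeSet ≃ Fin n) (a b : Fin n → ℝ)
    (hregion :
      (∀ (x y : V) (p : G.Walk x y), 0 < p.length → p.IsPath →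
        ((0 < ∑ i, altVec (edgeIdx N p) i * a i ∧ 0 < ∑ i, altVec (edgeIdx N p) i * b i) ∨
         (∑ i, altVec (edgeIdx N p) i * a i < 0 ∧ ∑ i, altVec (edgeIdx N p) i * b i < 0))) ∧
      (∀ (x : V) (p : G.Walk x x), p.IsCycle → Even p.length →
        ((0 < ∑ i, altVec (edgeIdx N p) i * a i ∧ 0 < ∑ i, altVec (edgeIdx N p) i * b i) ∨
         (∑ i, altVec (edgeIdx N p) i * a i < 0 ∧ ∑ i, altVec (edgeIdx N p) i * b i < 0))))
    (M : Finset (Fin n)) (hM : IdxMatching G N M)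
    (hmaxa : ∀ M', IdxMatching G N M' → M' ≠ M → ∑ i ∈ M', a i < ∑ i ∈ M, a i) :
    ∀ M', IdxMatching G N M' → M' ≠ M → ∑ i ∈ M', b i < ∑ i ∈ M, b i := by

  obtain ⟨hr1, hr2⟩ := hregion
  suffices H : ∀ (k : ℕ) (M' : Finset (Fin n)), IdxMatching G N M' → M' ≠ M →
      (symmDiff M M').card ≤ k → ∑ i ∈ M', b i < ∑ i ∈ M, b i by
    intro M' h1 h2
    exact H (symmDiff M M').card M' h1 h2 le_rfl
  intro k
  induction k with
  | zero =>
      intro M' h1 h2 hc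
      have h0 : symmDiff M M' = ∅ := Finset.card_eq_zero.mp (Nat.le_antisymm hc (Nat.zero_le _))
      exact absurd (symmDiff_eq_bot.mp h0).symm h2
  | succ k ih =>
      intro M' hM' hne hc
      obtain ⟨C, hCne, hCD, hMC, hM'C, hsgn⟩ :=
        exists_component N hM hM' a b hr1 hr2 (Ne.symm hne)
      have hMCne : symmDiff M C ≠ M := by
        intro h
        have hbot : C = ⊥ := symmDiff_eq_left.mp h
        rcases hCne with ⟨c, hcC⟩
        rw [hbot] at hcC
        simp at hcC
      have hlt := hmaxa (symmDiff M C) hMC hMCne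
      rw [sum_symmDiff_finset] at hlt
      have hda : 0 < dlt M C a := by rw [dlt]; linarith
      have hdb : 0 < dlt M C b := by
        rcases hsgn with ⟨h1, h2⟩ | ⟨h1, h2⟩
        · exact h2
        · linarith
      have hsum2 : ∀ w : Fin n → ℝ, ∑ i ∈ symmDiff M' C, w i = ∑ i ∈ M', w i + dlt M C w := by
        intro w
        rw [sum_symmDiff_finset, dlt]
        have e1 : C.filter (fun i => i ∈ M') = C.filter (fun i => i ∉ M) := by
          apply Finset.filter_congr
          intro i hi
          have := hCD hi
          rw [Finset.mem_symmDiff] at this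
          constructor <;> intro h' <;> tauto
        have e2 : C.filter (fun i => i ∉ M') = C.filter (fun i => i ∈ M) := by
          apply Finset.filter_congr
          intro i hi
          have := hCD hi
          rw [Finset.mem_symmDiff] at this
          constructor <;> intro h' <;> tauto
        rw [e1, e2]
        ring
      by_cases hM2 : symmDiff M' C = M
      · have hs := hsum2 b
        rw [hM2] at hs
        linarith
      · have he1 : symmDiff M (symmDiff M' C) = symmDiff (symmDiff M M') C := by
          rw [symmDiff_assoc]
        have he2 : symmDiff (symmDiff M M') C = (symmDiff M M') \ C := by
          ext i
          rw [Finset.mem_symmDiff, Finset.mem_sdiff]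
          constructor
          · rintro (⟨h1, h2⟩ | ⟨h1, h2⟩)
            · exact ⟨h1, h2⟩
            · exact absurd (hCD h1) h2
          · rintro ⟨h1, h2⟩
            exact Or.inl ⟨h1, h2⟩
        have hcard : (symmDiff M (symmDiff M' C)).card ≤ k := by
          rw [he1, he2, Finset.card_sdiff_of_subset hCD]
          have hCpos : 0 < C.card := Finset.Nonempty.card_pos hCne
          omega
        have hlt2 := ih (symmDiff M' C) hM'C hM2 hcard
        have hs := hsum2 b
        linarith
end

section
/- Let T be a tree, u a vertex, and for each vertex w ≠ u let c_w ∈ ℝⁿ be the alternating-sign vector of the unique path from u to w (starting sign + at the edge incident to u). Then for any two distinct vertices w₁, w₂ ≠ u, the vector c_{w₁} − c_{w₂} is, up to sign, the alternating-sign vector of the unique simple path from w₁ to w₂. -/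
open Finset

lemma altVec_append {n : ℕ} (l₁ l₂ : List (Fin n)) :
    altVec (l₁ ++ l₂) = altVec l₁ + (-1 : ℝ) ^ l₁.length • altVec l₂ := by
  induction l₁ with
  | nil => simp [altVec]
  | cons i l ih =>
    show Pi.single i 1 - altVec (l ++ l₂)
        = (Pi.single i 1 - altVec l) + (-1 : ℝ) ^ (l.length + 1) • altVec l₂
    rw [ih, pow_succ]
    module

lemma altVec_reverse {n : ℕ} (l : List (Fin n)) :
    altVec l.reverse = (-1 : ℝ) ^ (l.length + 1) • altVec l := by
  induction l with
  | nil => simp [altVec]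
  | cons i l ih =>
    rw [List.reverse_cons, altVec_append, ih]
    show (-1 : ℝ) ^ (l.length + 1) • altVec l + (-1 : ℝ) ^ l.reverse.length • (Pi.single i 1 - 0)
        = (-1 : ℝ) ^ (l.length + 1 + 1) • (Pi.single i 1 - altVec l)
    rw [List.length_reverse, pow_succ ((-1:ℝ)) (l.length + 1), pow_succ ((-1:ℝ)) l.length]
    module

lemma edgeIdx_cons_s14 {V : Type*} {n : ℕ} {G : SimpleGraph V} (N : G.edgeSet ≃ Fin n)
    {a b c : V} (h : G.Adj a b) (p : G.Walk b c) :
    edgeIdx N (SimpleGraph.Walk.cons h p) = N ⟨s(a, b), h⟩ :: edgeIdx N p := rfl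

lemma edgeIdx_append {V : Type*} {n : ℕ} {G : SimpleGraph V} (N : G.edgeSet ≃ Fin n)
    {a b c : V} (p : G.Walk a b) (q : G.Walk b c) :
    edgeIdx N (p.append q) = edgeIdx N p ++ edgeIdx N q := by
  induction p with
  | nil => rfl
  | cons h p ih =>
    rw [SimpleGraph.Walk.cons_append, edgeIdx_cons_s14, edgeIdx_cons_s14, ih, List.cons_append]

lemma edgeIdx_reverse {V : Type*} {n : ℕ} {G : SimpleGraph V} (N : G.edgeSet ≃ Fin n)
    {a b : V} (p : G.Walk a b) :
    edgeIdx N p.reverse = (edgeIdx N p).reverse := by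
  induction p with
  | nil => rfl
  | cons h p ih =>
    rw [SimpleGraph.Walk.reverse_cons, edgeIdx_append, ih, edgeIdx_cons_s14]
    simp [Sym2.eq_swap, edgeIdx, SimpleGraph.Walk.edges]

lemma length_edgeIdx_s14 {V : Type*} {n : ℕ} {G : SimpleGraph V} (N : G.edgeSet ≃ Fin n)
    {a b : V} (p : G.Walk a b) : (edgeIdx N p).length = p.length := by
  simp [edgeIdx]

lemma getVert_one_takeUntil {V : Type*} [DecidableEq V] {G : SimpleGraph V} {u w x : V}
    (p : G.Walk u w) (hx : x ∈ p.support) (hxu : x ≠ u) :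
    p.getVert 1 = (p.takeUntil x hx).getVert 1 := by
  have hlen : 1 ≤ (p.takeUntil x hx).length := by
    rcases Nat.eq_zero_or_pos (p.takeUntil x hx).length with h0 | h
    · exfalso
      apply hxu
      have h1 := (p.takeUntil x hx).getVert_length
      rw [h0, SimpleGraph.Walk.getVert_zero] at h1
      exact h1.symm
    · exact h
  conv_lhs => rw [← SimpleGraph.Walk.take_spec p hx]
  rw [SimpleGraph.Walk.getVert_append]
  split_ifs with h
  · rfl
  · have h1 : (p.takeUntil x hx).length = 1 := by omega
    rw [h1, Nat.sub_self, SimpleGraph.Walk.getVert_zero, ← h1,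
      SimpleGraph.Walk.getVert_length]

lemma getVert_one_eq {V : Type*} [DecidableEq V] {T : SimpleGraph V} (hT : T.IsTree)
    {u w₁ w₂ x : V} {p₁ : T.Walk u w₁} {p₂ : T.Walk u w₂}
    (hp₁ : p₁.IsPath) (hp₂ : p₂.IsPath)
    (hx₁ : x ∈ p₁.support) (hx₂ : x ∈ p₂.support) (hxu : x ≠ u) :
    p₁.getVert 1 = p₂.getVert 1 := by
  have h12 : p₁.takeUntil x hx₁ = p₂.takeUntil x hx₂ :=
    (hT.existsUnique_path u x).unique (hp₁.takeUntil hx₁) (hp₂.takeUntil hx₂)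
  rw [getVert_one_takeUntil p₁ hx₁ hxu, getVert_one_takeUntil p₂ hx₂ hxu, h12]

lemma pathVec_aux {V : Type*} [DecidableEq V] {n : ℕ} {T : SimpleGraph V}
    (hT : T.IsTree) (N : T.edgeSet ≃ Fin n) :
    ∀ (k : ℕ) (u w₁ w₂ : V) (p₁ : T.Walk u w₁) (p₂ : T.Walk u w₂) (q : T.Walk w₁ w₂),
      p₁.length = k → p₁.IsPath → p₂.IsPath → q.IsPath →
      (altVec (edgeIdx N p₁) - altVec (edgeIdx N p₂) = altVec (edgeIdx N q) ∨
       altVec (edgeIdx N p₁) - altVec (edgeIdx N p₂) = -altVec (edgeIdx N q)) := by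
  intro k
  induction k using Nat.strong_induction_on with
  | _ k ihk =>
  intro u w₁ w₂ p₁ p₂ q hk hp₁ hp₂ hq
  by_cases hu₁ : w₁ = u
  · subst hu₁
    have h1 : p₁ = SimpleGraph.Walk.nil :=
      (hT.existsUnique_path w₁ w₁).unique hp₁ SimpleGraph.Walk.IsPath.nil
    have h2 : q = p₂ := (hT.existsUnique_path w₁ w₂).unique hq hp₂
    right
    rw [h1, ← h2]
    show (0 : Fin n → ℝ) - altVec (edgeIdx N q) = -altVec (edgeIdx N q)
    module
  by_cases hu₂ : w₂ = u
  · subst hu₂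
    have h1 : p₂ = SimpleGraph.Walk.nil :=
      (hT.existsUnique_path w₂ w₂).unique hp₂ SimpleGraph.Walk.IsPath.nil
    have h2 : q = p₁.reverse := (hT.existsUnique_path w₁ w₂).unique hq hp₁.reverse
    rw [h1, h2, edgeIdx_reverse, altVec_reverse, length_edgeIdx_s14]
    rcases Nat.even_or_odd p₁.length with he | ho
    · right
      rw [Odd.neg_one_pow (by exact he.add_one)]
      show altVec (edgeIdx N p₁) - (0 : Fin n → ℝ) = -((-1 : ℝ) • altVec (edgeIdx N p₁))
      module
    · left
      rw [Even.neg_one_pow (by exact ho.add_one)]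
      show altVec (edgeIdx N p₁) - (0 : Fin n → ℝ) = (1 : ℝ) • altVec (edgeIdx N p₁)
      module
  cases p₁ with
  | nil => exact absurd rfl hu₁
  | cons h₁ t₁ =>
    rename_i v₁
    cases p₂ with
    | nil => exact absurd rfl hu₂
    | cons h₂ t₂ =>
      rename_i v₂
      by_cases hv : v₁ = v₂
      · subst hv
        have hlt : t₁.length < k := by
          rw [← hk, SimpleGraph.Walk.length_cons]; omega
        have key := ihk t₁.length hlt v₁ w₁ w₂ t₁ t₂ q rfl hp₁.of_cons hp₂.of_cons hq
        have e : altVec (edgeIdx N (SimpleGraph.Walk.cons h₁ t₁)) -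
            altVec (edgeIdx N (SimpleGraph.Walk.cons h₂ t₂)) =
            -(altVec (edgeIdx N t₁) - altVec (edgeIdx N t₂)) := by
          show (Pi.single (N ⟨s(u, v₁), h₁⟩) 1 - altVec (edgeIdx N t₁)) -
              (Pi.single (N ⟨s(u, v₁), h₁⟩) 1 - altVec (edgeIdx N t₂)) =
              -(altVec (edgeIdx N t₁) - altVec (edgeIdx N t₂))
          module
        rcases key with hk' | hk'
        · right; rw [e, hk']
        · left; rw [e, hk', neg_neg]
      · have hdisj : ∀ x, x ∈ (SimpleGraph.Walk.cons h₁ t₁).support →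
            x ∈ (SimpleGraph.Walk.cons h₂ t₂).support → x = u := by
          intro x hx1 hx2
          by_contra hxu
          apply hv
          have hgv := getVert_one_eq hT hp₁ hp₂ hx1 hx2 hxu
          rwa [SimpleGraph.Walk.getVert_cons_succ (n := 0), SimpleGraph.Walk.getVert_cons_succ (n := 0),
              SimpleGraph.Walk.getVert_zero, SimpleGraph.Walk.getVert_zero] at hgv
        have hiq : ((SimpleGraph.Walk.cons h₁ t₁).reverse.append
            (SimpleGraph.Walk.cons h₂ t₂)).IsPath := by
          rw [SimpleGraph.Walk.isPath_def, SimpleGraph.Walk.support_append,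
            SimpleGraph.Walk.support_reverse]
          refine List.Nodup.append (List.nodup_reverse.mpr hp₁.support_nodup)
            hp₂.support_nodup.tail ?_
          intro x hx1 hx2
          have hx1' : x ∈ (SimpleGraph.Walk.cons h₁ t₁).support := List.mem_reverse.mp hx1
          have hx2' : x ∈ (SimpleGraph.Walk.cons h₂ t₂).support := List.mem_of_mem_tail hx2
          have hxu := hdisj x hx1' hx2'
          subst hxu
          have hnodup := hp₂.support_nodup
          rw [SimpleGraph.Walk.support_cons] at hnodup hx2
          rw [List.tail_cons] at hx2
          exact (List.nodup_cons.mp hnodup).1 hx2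
        have hq' : q = (SimpleGraph.Walk.cons h₁ t₁).reverse.append
            (SimpleGraph.Walk.cons h₂ t₂) :=
          (hT.existsUnique_path w₁ w₂).unique hq hiq
        rw [hq', edgeIdx_append, edgeIdx_reverse, altVec_append, altVec_reverse,
          List.length_reverse, length_edgeIdx_s14]
        rcases Nat.even_or_odd ((SimpleGraph.Walk.cons h₁ t₁).length) with he | ho
        · right
          rw [Even.neg_one_pow he, Odd.neg_one_pow he.add_one]
          module
        · left
          rw [Odd.neg_one_pow ho, Even.neg_one_pow ho.add_one]
          module

/-- Let `T` be a tree, `u` a vertex, and for `w ≠ u` let `c_w` be the alternating-sign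
vector of the unique simple path from `u` to `w` (starting with sign `+` at the edge
incident to `u`). Then for distinct vertices `w₁, w₂ ≠ u`, the vector `c_{w₁} - c_{w₂}` is,
up to sign, the alternating-sign vector of the unique simple path from `w₁` to `w₂`. -/
theorem pathVec_sub_pathVec {V : Type*} [Fintype V] [DecidableEq V] {n : ℕ}
    (T : SimpleGraph V) (hT : T.IsTree) (N : T.edgeSet ≃ Fin n)
    (u w₁ w₂ : V) (hw₁ : w₁ ≠ u) (hw₂ : w₂ ≠ u) (hne : w₁ ≠ w₂)
    (p₁ : T.Walk u w₁) (p₂ : T.Walk u w₂) (q : T.Walk w₁ w₂)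
    (hp₁ : p₁.IsPath) (hp₂ : p₂.IsPath) (hq : q.IsPath) :
    altVec (edgeIdx N p₁) - altVec (edgeIdx N p₂) = altVec (edgeIdx N q) ∨
    altVec (edgeIdx N p₁) - altVec (edgeIdx N p₂) = -altVec (edgeIdx N q) :=
  pathVec_aux hT N p₁.length u w₁ w₂ p₁ p₂ q rfl hp₁ hp₂ hq
end
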